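/- Let τ₁,…,τ_s be nonempty words over the positive integers and let π be a permutation of {1,…,s}. Then the multi-patterns τ₁-τ₂-⋯-τ_s and τ_{π(1)}-τ_{π(2)}-⋯-τ_{π(s)} are equivalent; that is, for every finite set A of positive integers and all n, m ≥ 0, |C_{n;m}^A(τ₁-⋯-τ_s)| = |C_{n;m}^A(τ_{π(1)}-⋯-τ_{π(s)})|. -/

import Mathlib

/-- A composition of `n` with `m` parts, all parts in `A`. -/
def IsCompOf (A : Finset ℕ) (n m : ℕ) (σ : List ℕ) : Prop :=
  (∀ x ∈ σ, x ∈ A) ∧ σ.sum = n ∧ σ.length = m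

/-- The contiguous factor of `σ` of length `w.length` starting at position `i` is
order-isomorphic to the word `w`. -/
def WordIsoAt (w σ : List ℕ) (i : ℕ) : Prop :=
  i + w.length ≤ σ.length ∧ ∀ s t : ℕ, s < w.length → t < w.length →
    (w.getD s 0 < w.getD t 0 ↔ σ.getD (i + s) 0 < σ.getD (i + t) 0)

/-- An occurrence of the multi-pattern `ws 0 - ws 1 - ⋯ - ws (s-1)` in `σ`:
contiguous factors, the `i`-th order-isomorphic to `ws i` and starting at `st i`,
each ending strictly before the next begins. -/
def MultiOccurs {s : ℕ} (ws : Fin s → List ℕ) (σ : List ℕ) : Prop :=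
  ∃ st : Fin s → ℕ,
    (∀ i : Fin s, WordIsoAt (ws i) σ (st i)) ∧
    ∀ i j : Fin s, i < j → st i + (ws i).length ≤ st j

namespace Stmt14Aux

lemma wordIso_append_left {w α β : List ℕ} {i : ℕ} (h : i + w.length ≤ α.length) :
    WordIsoAt w (α ++ β) i ↔ WordIsoAt w α i := by
  constructor
  · rintro ⟨-, h2⟩
    refine ⟨h, fun s t hs ht => ?_⟩
    rw [h2 s t hs ht, List.getD_append _ _ _ _ (by omega), List.getD_append _ _ _ _ (by omega)]
  · rintro ⟨h1, h2⟩
    refine ⟨by simp only [List.length_append]; omega, fun s t hs ht => ?_⟩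
    rw [List.getD_append _ _ _ _ (by omega), List.getD_append _ _ _ _ (by omega)]
    exact h2 s t hs ht

lemma wordIso_append_right {w β : List ℕ} (α : List ℕ) {j : ℕ} :
    WordIsoAt w (α ++ β) (α.length + j) ↔ WordIsoAt w β j := by
  have key : ∀ u, (α ++ β).getD (α.length + j + u) 0 = β.getD (j + u) 0 := by
    intro u
    rw [List.getD_append_right α β 0 _ (by omega)]
    congr 1
    omega
  constructor
  · rintro ⟨h1, h2⟩
    rw [List.length_append] at h1
    refine ⟨by omega, fun s t hs ht => ?_⟩
    rw [h2 s t hs ht, key s, key t]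
  · rintro ⟨h1, h2⟩
    refine ⟨by rw [List.length_append]; omega, fun s t hs ht => ?_⟩
    rw [key s, key t]
    exact h2 s t hs ht

lemma wordIso_drop {w σ : List ℕ} {b j : ℕ} (hb : b ≤ σ.length) :
    WordIsoAt w (σ.drop b) j ↔ WordIsoAt w σ (b + j) := by
  have h := wordIso_append_right (w := w) (β := σ.drop b) (σ.take b) (j := j)
  rw [List.take_append_drop] at h
  rw [List.length_take, min_eq_left hb] at h
  exact h.symm

lemma wordIso_take {w σ : List ℕ} {b i : ℕ} (hb : b ≤ σ.length) (h : i + w.length ≤ b) :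
    WordIsoAt w (σ.take b) i ↔ WordIsoAt w σ i := by
  have hlen : (σ.take b).length = b := by rw [List.length_take]; omega
  have key := wordIso_append_left (w := w) (α := σ.take b) (β := σ.drop b) (i := i)
    (by omega)
  rw [List.take_append_drop] at key
  exact key.symm

lemma multiOccurs_of_drop {s : ℕ} {ws : Fin s → List ℕ} {γ : List ℕ} {c : ℕ}
    (h : MultiOccurs ws (γ.drop c)) : MultiOccurs ws γ := by
  obtain ⟨st, h1, h2⟩ := h
  refine ⟨fun i => (γ.take c).length + st i, fun i => ?_, fun i j hij => ?_⟩
  · have key := (wordIso_append_right (w := ws i) (β := γ.drop c) (γ.take c)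
      (j := st i)).2 (h1 i)
    rwa [List.take_append_drop] at key
  · show (γ.take c).length + st i + (ws i).length ≤ (γ.take c).length + st j
    have := h2 i j hij
    omega

lemma multiOccurs_succ {s : ℕ} {ws : Fin (s + 1) → List ℕ} {σ : List ℕ} :
    MultiOccurs ws σ ↔ ∃ i, WordIsoAt (ws 0) σ i ∧
      MultiOccurs (Fin.tail ws) (σ.drop (i + (ws 0).length)) := by
  constructor
  · rintro ⟨st, h1, h2⟩
    have hbσ : st 0 + (ws 0).length ≤ σ.length := (h1 0).1
    have hb : ∀ k : Fin s, st 0 + (ws 0).length ≤ st k.succ :=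
      fun k => h2 0 k.succ (Fin.succ_pos k)
    refine ⟨st 0, h1 0, ⟨fun k => st k.succ - (st 0 + (ws 0).length), fun k => ?_, fun i j hij => ?_⟩⟩
    · show WordIsoAt (ws k.succ) _ _
      rw [wordIso_drop hbσ,
        (by have := hb k; omega :
          st 0 + (ws 0).length + (st k.succ - (st 0 + (ws 0).length)) = st k.succ)]
      exact h1 k.succ
    · show st i.succ - _ + (ws i.succ).length ≤ st j.succ - _
      have h3 := h2 i.succ j.succ (Fin.succ_lt_succ_iff.mpr hij)
      have := hb i
      have := hb j
      omega
  · rintro ⟨i, hi, st, h1, h2⟩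
    have hbσ : i + (ws 0).length ≤ σ.length := hi.1
    refine ⟨Fin.cons i (fun k => i + (ws 0).length + st k), fun k => ?_, fun k l hkl => ?_⟩
    · refine Fin.cases ?_ (fun k => ?_) k
      · simpa using hi
      · simp only [Fin.cons_succ]
        have := (wordIso_drop (w := ws k.succ) (j := st k) hbσ).1 (h1 k)
        exact this
    · revert hkl
      refine Fin.cases ?_ (fun k' => ?_) k <;> refine Fin.cases ?_ (fun l' => ?_) l <;>
        intro hkl
      · exact absurd hkl (lt_irrefl _)
      · simp only [Fin.cons_zero, Fin.cons_succ]; omega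
      · exact absurd hkl (by simp [Fin.lt_def])
      · simp only [Fin.cons_succ]
        have h3 := h2 k' l' (Fin.succ_lt_succ_iff.mp hkl)
        have h4 : (Fin.tail ws k').length = (ws k'.succ).length := rfl
        omega

/-- `P` is a minimal word ending with an occurrence of `w`: `w` occurs at the very end of `P`
and nowhere else in `P`. -/
def MinPref (w P : List ℕ) : Prop :=
  w.length ≤ P.length ∧ WordIsoAt w P (P.length - w.length) ∧
    ∀ i, WordIsoAt w P i → i = P.length - w.length

lemma decomp {s : ℕ} : ∀ (ws : Fin s → List ℕ) (σ : List ℕ),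
    MultiOccurs ws σ ↔ ∃ (P : Fin s → List ℕ) (S : List ℕ),
      (∀ i, MinPref (ws i) (P i)) ∧ σ = (List.ofFn P).flatten ++ S := by
  induction s with
  | zero =>
    intro ws σ
    constructor
    · intro _
      exact ⟨fun k => k.elim0, σ, fun k => k.elim0, by simp⟩
    · intro _
      exact ⟨fun k => k.elim0, fun k => k.elim0, fun k => k.elim0⟩
  | succ s ih =>
    intro ws σ
    rw [multiOccurs_succ]
    constructor
    · rintro ⟨i, hi, htail⟩
      classical
      have hex : ∃ k, WordIsoAt (ws 0) σ k := ⟨i, hi⟩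
      have hiso0 : WordIsoAt (ws 0) σ (Nat.find hex) := Nat.find_spec hex
      have hmin : ∀ k, WordIsoAt (ws 0) σ k → Nat.find hex ≤ k :=
        fun k hk => Nat.find_min' hex hk
      set i0 := Nat.find hex with hi0
      set b := i0 + (ws 0).length with hbdef
      have hble : b ≤ i + (ws 0).length := by have := hmin i hi; omega
      have hbσ : b ≤ σ.length := le_trans hble hi.1
      have hdd : (σ.drop b).drop (i + (ws 0).length - b) = σ.drop (i + (ws 0).length) := by
        rw [List.drop_drop]
        congr 1
        omega
      have htail2 : MultiOccurs (Fin.tail ws) (σ.drop b) :=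
        multiOccurs_of_drop (c := i + (ws 0).length - b) (by rw [hdd]; exact htail)
      obtain ⟨P', S, hP', hσ'⟩ := (ih (Fin.tail ws) (σ.drop b)).1 htail2
      have hlen : (σ.take b).length = b := by rw [List.length_take]; omega
      refine ⟨Fin.cons (σ.take b) P', S, fun k => ?_, ?_⟩
      · refine Fin.cases ?_ (fun k => ?_) k
        · simp only [Fin.cons_zero]
          refine ⟨by omega, ?_, ?_⟩
          · rw [hlen, (by omega : b - (ws 0).length = i0)]
            exact (wordIso_take hbσ (by omega)).2 hiso0
          · intro k hk
            have hkb : k + (ws 0).length ≤ b := by have := hk.1; omega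
            have := hmin k ((wordIso_take hbσ hkb).1 hk)
            omega
        · simpa only [Fin.cons_succ, Fin.tail] using hP' k
      · simp only [List.ofFn_succ, Fin.cons_zero, Fin.cons_succ, List.flatten_cons,
          List.append_assoc]
        rw [← hσ', List.take_append_drop]
    · rintro ⟨P, S, hP, hσ⟩
      simp only [List.ofFn_succ, List.flatten_cons, List.append_assoc] at hσ
      obtain ⟨hlen0, hiso0, -⟩ := hP 0
      refine ⟨(P 0).length - (ws 0).length, ?_, ?_⟩
      · rw [hσ]
        exact (wordIso_append_left (by omega)).2 hiso0
      · rw [(by omega : (P 0).length - (ws 0).length + (ws 0).length = (P 0).length), hσ,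
          List.drop_left]
        exact (ih (Fin.tail ws) _).2 ⟨fun k => P k.succ, S, fun k => hP k.succ, rfl⟩

lemma minPref_len_le {x α β α' β' : List ℕ} (h1 : MinPref x α) (h2 : MinPref x α')
    (he : α ++ β = α' ++ β') (hle : α.length ≤ α'.length) : α'.length ≤ α.length := by
  obtain ⟨hl1, hi1, -⟩ := h1
  obtain ⟨hl2, -, hm2⟩ := h2
  have hiσ : WordIsoAt x (α ++ β) (α.length - x.length) :=
    (wordIso_append_left (by omega)).2 hi1
  rw [he] at hiσ
  have hiα' : WordIsoAt x α' (α.length - x.length) :=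
    (wordIso_append_left (by omega)).1 hiσ
  have := hm2 _ hiα'
  omega

lemma minPref_cancel {x α β α' β' : List ℕ} (h1 : MinPref x α) (h2 : MinPref x α')
    (he : α ++ β = α' ++ β') : α = α' ∧ β = β' := by
  have hlen : α.length = α'.length := by
    rcases le_total α.length α'.length with h | h
    · exact le_antisymm h (minPref_len_le h1 h2 he h)
    · exact le_antisymm (minPref_len_le h2 h1 he.symm h) h
  have hα : α = α' := by
    calc α = (α ++ β).take α.length := List.take_left.symm
      _ = (α' ++ β').take α'.length := by rw [he, hlen]
      _ = α' := List.take_left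
  subst hα
  exact ⟨rfl, List.append_cancel_left he⟩

lemma decomp_unique {s : ℕ} : ∀ (ws P Q : Fin s → List ℕ) (S T : List ℕ),
    (∀ i, MinPref (ws i) (P i)) → (∀ i, MinPref (ws i) (Q i)) →
    (List.ofFn P).flatten ++ S = (List.ofFn Q).flatten ++ T → P = Q ∧ S = T := by
  induction s with
  | zero =>
    intro ws P Q S T _ _ h
    simp only [List.ofFn_zero, List.flatten_nil, List.nil_append] at h
    exact ⟨funext fun k => k.elim0, h⟩
  | succ s ih =>
    intro ws P Q S T hP hQ h
    simp only [List.ofFn_succ, List.flatten_cons, List.append_assoc] at h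
    obtain ⟨h0, hrest⟩ := minPref_cancel (hP 0) (hQ 0) h
    obtain ⟨htail, hST⟩ := ih (Fin.tail ws) (fun k => P k.succ) (fun k => Q k.succ) S T
      (fun k => hP k.succ) (fun k => hQ k.succ) hrest
    refine ⟨funext fun k => ?_, hST⟩
    refine Fin.cases h0 (fun k => ?_) k
    exact congrFun htail k

lemma flatten_ofFn_sum {s : ℕ} (f : Fin s → List ℕ) :
    (List.ofFn f).flatten.sum = ∑ i, (f i).sum := by
  rw [List.sum_flatten, List.map_ofFn, List.sum_ofFn]
  rfl

lemma flatten_ofFn_length {s : ℕ} (f : Fin s → List ℕ) :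
    (List.ofFn f).flatten.length = ∑ i, (f i).length := by
  rw [List.length_flatten, List.map_ofFn, List.sum_ofFn]
  rfl

lemma flatten_ofFn_mem {s : ℕ} (f : Fin s → List ℕ) (x : ℕ) :
    x ∈ (List.ofFn f).flatten ↔ ∃ i, x ∈ f i := by
  rw [List.mem_flatten]
  constructor
  · rintro ⟨l, hl, hx⟩
    rw [List.mem_ofFn] at hl
    obtain ⟨i, rfl⟩ := hl
    exact ⟨i, hx⟩
  · rintro ⟨i, hx⟩
    exact ⟨f i, by rw [List.mem_ofFn]; exact ⟨i, rfl⟩, hx⟩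

lemma comp_perm {s : ℕ} (π : Equiv.Perm (Fin s)) (A : Finset ℕ) (n m : ℕ)
    (P : Fin s → List ℕ) (S : List ℕ) :
    IsCompOf A n m ((List.ofFn (P ∘ π)).flatten ++ S) ↔
      IsCompOf A n m ((List.ofFn P).flatten ++ S) := by
  have hsum : ((List.ofFn (P ∘ π)).flatten ++ S).sum = ((List.ofFn P).flatten ++ S).sum := by
    simp only [List.sum_append, flatten_ofFn_sum]
    congr 1
    exact Equiv.sum_comp π fun i => (P i).sum
  have hlen : ((List.ofFn (P ∘ π)).flatten ++ S).length
      = ((List.ofFn P).flatten ++ S).length := by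
    simp only [List.length_append, flatten_ofFn_length]
    congr 1
    exact Equiv.sum_comp π fun i => (P i).length
  have hmem : ∀ x, x ∈ (List.ofFn (P ∘ π)).flatten ++ S ↔ x ∈ (List.ofFn P).flatten ++ S := by
    intro x
    simp only [List.mem_append, flatten_ofFn_mem]
    constructor
    · rintro (⟨i, hi⟩ | hx)
      exacts [Or.inl ⟨π i, hi⟩, Or.inr hx]
    · rintro (⟨i, hi⟩ | hx)
      · exact Or.inl ⟨π.symm i, by simpa [Function.comp] using hi⟩
      · exact Or.inr hx
  unfold IsCompOf
  rw [hsum, hlen]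
  exact and_congr (forall_congr' fun x => imp_congr (hmem x) Iff.rfl) Iff.rfl

lemma ofFn_getD (l : List ℕ) {m : ℕ} (h : l.length = m) :
    List.ofFn (fun i : Fin m => l.getD i 0) = l := by
  refine List.ext_getElem (by simp [h]) fun i h1 h2 => ?_
  rw [List.getElem_ofFn]
  exact List.getD_eq_getElem l 0 h2

lemma comp_finite (A : Finset ℕ) (n m : ℕ) : {σ : List ℕ | IsCompOf A n m σ}.Finite := by
  have hfin : ((fun f : Fin m → ℕ => List.ofFn f) ''
      (Set.univ.pi fun _ : Fin m => (A : Set ℕ))).Finite :=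
    (Set.Finite.pi fun _ => A.finite_toSet).image _
  refine hfin.subset fun σ hσ => ?_
  obtain ⟨hmem, -, hlen⟩ := hσ
  refine ⟨fun i => σ.getD i 0, ?_, ofFn_getD σ hlen⟩
  intro i _
  show σ.getD i 0 ∈ (A : Set ℕ)
  have hi : (i : ℕ) < σ.length := by omega
  rw [List.getD_eq_getElem σ 0 hi]
  simpa using hmem _ (List.getElem_mem hi)

lemma ncard_occ {s : ℕ} (ws : Fin s → List ℕ) (A : Finset ℕ) (n m : ℕ) :
    {σ : List ℕ | IsCompOf A n m σ ∧ MultiOccurs ws σ}.ncard =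
      {p : (Fin s → List ℕ) × List ℕ | (∀ i, MinPref (ws i) (p.1 i)) ∧
        IsCompOf A n m ((List.ofFn p.1).flatten ++ p.2)}.ncard := by
  have himg : {σ : List ℕ | IsCompOf A n m σ ∧ MultiOccurs ws σ} =
      (fun p : (Fin s → List ℕ) × List ℕ => (List.ofFn p.1).flatten ++ p.2) ''
        {p | (∀ i, MinPref (ws i) (p.1 i)) ∧ IsCompOf A n m ((List.ofFn p.1).flatten ++ p.2)} := by
    ext σ
    constructor
    · rintro ⟨hc, ho⟩
      obtain ⟨P, S, hMin, hσ⟩ := (decomp ws σ).1 ho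
      exact ⟨(P, S), ⟨hMin, hσ ▸ hc⟩, hσ.symm⟩
    · rintro ⟨⟨P, S⟩, ⟨hMin, hc⟩, rfl⟩
      exact ⟨hc, (decomp ws _).2 ⟨P, S, hMin, rfl⟩⟩
  rw [himg]
  refine Set.ncard_image_of_injOn ?_
  rintro ⟨P, S⟩ ⟨hP, -⟩ ⟨Q, T⟩ ⟨hQ, -⟩ h
  obtain ⟨h1, h2⟩ := decomp_unique ws P Q S T hP hQ h
  simp [h1, h2]

end Stmt14Aux

open Stmt14Aux in
theorem stmt14 {s : ℕ} (ws : Fin s → List ℕ)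
    (hw : ∀ i, ws i ≠ []) (hwpos : ∀ i, ∀ x ∈ ws i, 0 < x)
    (π : Equiv.Perm (Fin s)) :
    ∀ (A : Finset ℕ), (∀ a ∈ A, 0 < a) → ∀ n m : ℕ,
      Set.ncard {σ : List ℕ | IsCompOf A n m σ ∧ ¬ MultiOccurs ws σ}
        = Set.ncard {σ : List ℕ | IsCompOf A n m σ ∧ ¬ MultiOccurs (ws ∘ π) σ} := by
  intro A hA n m
  have hfin := comp_finite A n m
  -- the two "contains" sets have the same cardinality
  have hDcard : {p : (Fin s → List ℕ) × List ℕ | (∀ i, MinPref (ws i) (p.1 i)) ∧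
        IsCompOf A n m ((List.ofFn p.1).flatten ++ p.2)}.ncard =
      {p : (Fin s → List ℕ) × List ℕ | (∀ i, MinPref ((ws ∘ π) i) (p.1 i)) ∧
        IsCompOf A n m ((List.ofFn p.1).flatten ++ p.2)}.ncard := by
    have himg : {p : (Fin s → List ℕ) × List ℕ | (∀ i, MinPref ((ws ∘ π) i) (p.1 i)) ∧
        IsCompOf A n m ((List.ofFn p.1).flatten ++ p.2)} =
        (fun p : (Fin s → List ℕ) × List ℕ => (p.1 ∘ π, p.2)) ''
          {p | (∀ i, MinPref (ws i) (p.1 i)) ∧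
            IsCompOf A n m ((List.ofFn p.1).flatten ++ p.2)} := by
      ext q
      constructor
      · rintro ⟨hMin, hc⟩
        refine ⟨(q.1 ∘ π.symm, q.2), ⟨fun i => ?_, ?_⟩, ?_⟩
        · have := hMin (π.symm i)
          simpa [Function.comp] using this
        · exact (comp_perm π.symm A n m q.1 q.2).2 hc
        · refine Prod.ext (funext fun i => ?_) rfl
          simp [Function.comp]
      · rintro ⟨⟨P, S⟩, ⟨hMin, hc⟩, rfl⟩
        exact ⟨fun i => hMin (π i), (comp_perm π A n m P S).2 hc⟩
    rw [himg]
    refine (Set.ncard_image_of_injOn ?_).symm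
    rintro ⟨P, S⟩ - ⟨Q, T⟩ - h
    have h1 : P ∘ π = Q ∘ π := congrArg Prod.fst h
    have h2 : S = T := congrArg Prod.snd h
    refine Prod.ext (funext fun i => ?_) h2
    have := congrFun h1 (π.symm i)
    simpa [Function.comp] using this
  have hocc : {σ : List ℕ | IsCompOf A n m σ ∧ MultiOccurs ws σ}.ncard =
      {σ : List ℕ | IsCompOf A n m σ ∧ MultiOccurs (ws ∘ π) σ}.ncard := by
    rw [ncard_occ ws A n m, ncard_occ (ws ∘ π) A n m, hDcard]
  -- turn "avoids" into complement counts
  have hset1 : {σ : List ℕ | IsCompOf A n m σ ∧ ¬ MultiOccurs ws σ} =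
      {σ : List ℕ | IsCompOf A n m σ} \ {σ : List ℕ | IsCompOf A n m σ ∧ MultiOccurs ws σ} := by
    ext σ; simp only [Set.mem_setOf_eq, Set.mem_diff]; tauto
  have hset2 : {σ : List ℕ | IsCompOf A n m σ ∧ ¬ MultiOccurs (ws ∘ π) σ} =
      {σ : List ℕ | IsCompOf A n m σ} \
        {σ : List ℕ | IsCompOf A n m σ ∧ MultiOccurs (ws ∘ π) σ} := by
    ext σ; simp only [Set.mem_setOf_eq, Set.mem_diff]; tauto
  have hsub1 : {σ : List ℕ | IsCompOf A n m σ ∧ MultiOccurs ws σ} ⊆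
      {σ : List ℕ | IsCompOf A n m σ} := fun σ hσ => hσ.1
  have hsub2 : {σ : List ℕ | IsCompOf A n m σ ∧ MultiOccurs (ws ∘ π) σ} ⊆
      {σ : List ℕ | IsCompOf A n m σ} := fun σ hσ => hσ.1
  rw [hset1, hset2, Set.ncard_diff hsub1 (hfin.subset hsub1),
    Set.ncard_diff hsub2 (hfin.subset hsub2), hocc]
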